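/- Let ψ be a homeomorphism of ℝ² with M := ‖ψ‖_* < ∞. Then for every pair of distinct points x, y ∈ ℝ²: (1) if |x−y| ≥ 1 and |ψ(x)−ψ(y)| ≥ 1 then e^{−1}|x−y|^{1/M} ≤ |ψ(x)−ψ(y)| ≤ e^{M}|x−y|^{M}; (2) if |x−y| ≤ 1 and |ψ(x)−ψ(y)| ≤ 1 then e^{−M}|x−y|^{M} ≤ |ψ(x)−ψ(y)| ≤ e|x−y|^{1/M}; (3) in all remaining cases, e^{−M}|x−y| ≤ |ψ(x)−ψ(y)| ≤ e^{M}|x−y|. -/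
import Mathlib


open MeasureTheory Metric Real
open scoped ENNReal

noncomputable section

abbrev E2 := EuclideanSpace ℝ (Fin 2)

/-- The comparison function `Φ`. -/
def Phi (r s : ℝ) : ℝ :=
  if 0 ≤ (1 - s) * (1 - r) then
    max ((1 + |Real.log s|) / (1 + |Real.log r|)) ((1 + |Real.log r|) / (1 + |Real.log s|))
  else (1 + |Real.log s|) * (1 + |Real.log r|)

/-- `‖ψ‖_* = sup_{x ≠ y} Φ(|ψ(x)-ψ(y)|, |x-y|)`, a supremum taken in `[0,∞]`. -/
def starNorm (ψ : E2 → E2) : ℝ≥0∞ :=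
  ⨆ (x : E2) (y : E2) (_ : x ≠ y), ENNReal.ofReal (Phi (dist (ψ x) (ψ y)) (dist x y))

lemma one_le_Phi (r s : ℝ) : 1 ≤ Phi r s := by
  have ha : (0:ℝ) < 1 + |Real.log r| := by positivity
  have hb : (0:ℝ) < 1 + |Real.log s| := by positivity
  unfold Phi
  split
  · rcases le_total (1 + |Real.log r|) (1 + |Real.log s|) with h | h
    · exact le_trans ((one_le_div ha).mpr h) (le_max_left _ _)
    · exact le_trans ((one_le_div hb).mpr h) (le_max_right _ _)
  · nlinarith [abs_nonneg (Real.log r), abs_nonneg (Real.log s)]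

lemma Phi_le_starNorm (ψ : E2 → E2) (hfin : starNorm ψ ≠ ⊤) {x y : E2} (hxy : x ≠ y) :
    Phi (dist (ψ x) (ψ y)) (dist x y) ≤ (starNorm ψ).toReal := by
  have h : ENNReal.ofReal (Phi (dist (ψ x) (ψ y)) (dist x y)) ≤ starNorm ψ :=
    le_iSup_of_le x (le_iSup_of_le y (le_iSup_of_le hxy le_rfl))
  rwa [ENNReal.ofReal_le_iff_le_toReal hfin] at h

/-- bi-Hölder estimates for a homeomorphism with finite `‖ψ‖_*`. -/
theorem star_norm_holder (ψ : E2 ≃ₜ E2) (hfin : starNorm ψ ≠ ⊤)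
    (x y : E2) (hxy : x ≠ y) :
    (1 ≤ dist x y → 1 ≤ dist (ψ x) (ψ y) →
      Real.exp (-1) * dist x y ^ (1 / (starNorm ψ).toReal) ≤ dist (ψ x) (ψ y) ∧
      dist (ψ x) (ψ y) ≤ Real.exp (starNorm ψ).toReal * dist x y ^ (starNorm ψ).toReal) ∧
    (dist x y ≤ 1 → dist (ψ x) (ψ y) ≤ 1 →
      Real.exp (-(starNorm ψ).toReal) * dist x y ^ (starNorm ψ).toReal ≤ dist (ψ x) (ψ y) ∧
      dist (ψ x) (ψ y) ≤ Real.exp 1 * dist x y ^ (1 / (starNorm ψ).toReal)) ∧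
    (¬ (1 ≤ dist x y ∧ 1 ≤ dist (ψ x) (ψ y)) → ¬ (dist x y ≤ 1 ∧ dist (ψ x) (ψ y) ≤ 1) →
      Real.exp (-(starNorm ψ).toReal) * dist x y ≤ dist (ψ x) (ψ y) ∧
      dist (ψ x) (ψ y) ≤ Real.exp (starNorm ψ).toReal * dist x y) := by
  set M := (starNorm ψ).toReal with hMdef
  have hs : 0 < dist x y := dist_pos.mpr hxy
  have hr : 0 < dist (ψ x) (ψ y) := dist_pos.mpr (fun h => hxy (ψ.injective h))
  have hPhi : Phi (dist (ψ x) (ψ y)) (dist x y) ≤ M := Phi_le_starNorm ψ hfin hxy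
  have hM1 : 1 ≤ M := le_trans (one_le_Phi _ _) hPhi
  have hM0 : 0 < M := lt_of_lt_of_le one_pos hM1
  set r := dist (ψ x) (ψ y) with hrdef
  set s := dist x y with hsdef
  set u := Real.log r with hudef
  set v := Real.log s with hvdef
  refine ⟨?_, ?_, ?_⟩
  · intro hs1 hr1
    have hv0 : 0 ≤ v := Real.log_nonneg hs1
    have hu0 : 0 ≤ u := Real.log_nonneg hr1
    have hcond : 0 ≤ (1 - s) * (1 - r) := by nlinarith
    rw [Phi] at hPhi
    rw [if_pos hcond, max_le_iff, abs_of_nonneg hv0, abs_of_nonneg hu0,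
      div_le_iff₀ (by linarith), div_le_iff₀ (by linarith)] at hPhi
    obtain ⟨h1, h2⟩ := hPhi
    constructor
    · rw [← Real.log_le_log_iff (by positivity) hr,
        Real.log_mul (Real.exp_ne_zero _) (by positivity), Real.log_exp,
        Real.log_rpow hs, ← hudef, ← hvdef]
      have h3 : 1 / M * v ≤ 1 + u := by
        rw [one_div, inv_mul_eq_div, div_le_iff₀ hM0]; nlinarith
      linarith
    · rw [← Real.log_le_log_iff hr (by positivity),
        Real.log_mul (Real.exp_ne_zero _) (by positivity), Real.log_exp,
        Real.log_rpow hs, ← hudef, ← hvdef]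
      nlinarith
  · intro hs1 hr1
    have hv0 : v ≤ 0 := Real.log_nonpos hs.le hs1
    have hu0 : u ≤ 0 := Real.log_nonpos hr.le hr1
    have hcond : 0 ≤ (1 - s) * (1 - r) := by nlinarith
    rw [Phi] at hPhi
    rw [if_pos hcond, max_le_iff, abs_of_nonpos hv0, abs_of_nonpos hu0,
      div_le_iff₀ (by linarith), div_le_iff₀ (by linarith)] at hPhi
    obtain ⟨h1, h2⟩ := hPhi
    constructor
    · rw [← Real.log_le_log_iff (by positivity) hr,
        Real.log_mul (Real.exp_ne_zero _) (by positivity), Real.log_exp,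
        Real.log_rpow hs, ← hudef, ← hvdef]
      nlinarith
    · rw [← Real.log_le_log_iff hr (by positivity),
        Real.log_mul (Real.exp_ne_zero _) (by positivity), Real.log_exp,
        Real.log_rpow hs, ← hudef, ← hvdef]
      have h3 : (u - 1) * M ≤ v := by nlinarith
      have h4 : u - 1 ≤ v / M := by rw [le_div_iff₀ hM0]; exact h3
      rw [one_div, inv_mul_eq_div] at *
      linarith [h4]
  · intro hc1 hc2
    push_neg at hc1 hc2
    have hmix : (s < 1 ∧ 1 < r) ∨ (1 < s ∧ r < 1) := by
      rcases lt_trichotomy s 1 with h | h | h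
      · exact Or.inl ⟨h, hc2 h.le⟩
      · exfalso; exact absurd (hc2 h.le) (not_lt.mpr (hc1 h.ge).le)
      · exact Or.inr ⟨h, hc1 h.le⟩
    rcases hmix with ⟨hslt, hrgt⟩ | ⟨hsgt, hrlt⟩
    · have hv0 : v < 0 := Real.log_neg hs hslt
      have hu0 : 0 < u := Real.log_pos hrgt
      have hcond : ¬ 0 ≤ (1 - s) * (1 - r) := by
        rw [not_le]; apply mul_neg_of_pos_of_neg <;> linarith
      rw [Phi] at hPhi
      rw [if_neg hcond, abs_of_neg hv0, abs_of_pos hu0] at hPhi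
      have huv : u * v < 0 := mul_neg_of_pos_of_neg hu0 hv0
      constructor
      · rw [← Real.log_le_log_iff (by positivity) hr,
          Real.log_mul (Real.exp_ne_zero _) hs.ne', Real.log_exp, ← hudef, ← hvdef]
        linarith
      · rw [← Real.log_le_log_iff hr (by positivity),
          Real.log_mul (Real.exp_ne_zero _) hs.ne', Real.log_exp, ← hudef, ← hvdef]
        nlinarith
    · have hv0 : 0 < v := Real.log_pos hsgt
      have hu0 : u < 0 := Real.log_neg hr hrlt
      have hcond : ¬ 0 ≤ (1 - s) * (1 - r) := by
        rw [not_le]; apply mul_neg_of_neg_of_pos <;> linarith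
      rw [Phi] at hPhi
      rw [if_neg hcond, abs_of_pos hv0, abs_of_neg hu0] at hPhi
      have huv : u * v < 0 := mul_neg_of_neg_of_pos hu0 hv0
      constructor
      · rw [← Real.log_le_log_iff (by positivity) hr,
          Real.log_mul (Real.exp_ne_zero _) hs.ne', Real.log_exp, ← hudef, ← hvdef]
        nlinarith
      · rw [← Real.log_le_log_iff hr (by positivity),
          Real.log_mul (Real.exp_ne_zero _) hs.ne', Real.log_exp, ← hudef, ← hvdef]
        linarith
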